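/- Let p̃(t,x,y) = p_{Z_t}(y - x - b₀t) where p_{Z_t} is a density satisfying: there exist probability densities q̄(t,·) with q̄(t,x) = t^{-d}q̄(1,x/t), a constant C and β ∈ (0,1) such that |Dp_{Z_t}(z) - Dp_{Z_t}(z')| ≤ (C/t)(|z-z'|/t)^β (q̄(t,z) + q̄(t,z')), and q̄(t, x + h) ≤ C q̄(t,x) whenever |h| ≤ |b₀| t. Suppose also ∫|z|^η q̄(1,z)dz < ∞ for all η ∈ (0,1). Then there exist constants K ≥ 1 and C' (depending on C, β, |b₀|) such that for all λ ≥ 1 and all x, ξ ∈ ℝ^d: ∫_0^∞ e^{-λt} ∫_{|x-y| ≥ K|x-ξ|} |Dp̃(t,x,y) - Dp̃(t,ξ,y)| dy dt ≤ C'(1 + λ^{-1}). -/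

import Mathlib

open MeasureTheory Real

set_option maxHeartbeats 2000000

theorem stmt11 (d : ℕ) (b₀ : EuclideanSpace ℝ (Fin d))
    (pZ : ℝ → EuclideanSpace ℝ (Fin d) → ℝ)
    (qbar : ℝ → EuclideanSpace ℝ (Fin d) → ℝ)
    (hqpos : ∀ t > (0:ℝ), ∀ x, 0 ≤ qbar t x)
    (hqint : ∀ t > (0:ℝ), ∫ x, qbar t x = 1)
    (hqscale : ∀ t > (0:ℝ), ∀ x, qbar t x = t ^ (-(d : ℝ)) * qbar 1 (t⁻¹ • x))
    (C β : ℝ) (hC : 0 < C) (hβ : 0 < β) (hβ1 : β < 1)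
    (hHolder : ∀ t > (0:ℝ), ∀ z z' : EuclideanSpace ℝ (Fin d),
      ‖fderiv ℝ (pZ t) z - fderiv ℝ (pZ t) z'‖ ≤
        (C / t) * (‖z - z'‖ / t) ^ β * (qbar t z + qbar t z'))
    (hpert : ∀ t > (0:ℝ), ∀ (x h : EuclideanSpace ℝ (Fin d)), ‖h‖ ≤ ‖b₀‖ * t →
      qbar t (x + h) ≤ C * qbar t x)
    (hmom : ∀ η : ℝ, 0 < η → η < 1 → Integrable (fun z => ‖z‖ ^ η * qbar 1 z)) :
    ∃ K : ℝ, 1 ≤ K ∧ ∃ C' : ℝ, ∀ l : ℝ, 1 ≤ l → ∀ x ξ : EuclideanSpace ℝ (Fin d),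
      (∫ t in Set.Ioi (0:ℝ), Real.exp (-l * t) *
          ∫ y in {y : EuclideanSpace ℝ (Fin d) | K * ‖x - ξ‖ ≤ ‖x - y‖},
            ‖fderiv ℝ (pZ t) (y - x - t • b₀) - fderiv ℝ (pZ t) (y - ξ - t • b₀)‖)
        ≤ C' * (1 + l⁻¹) := by
  have hb0 : (0:ℝ) ≤ ‖b₀‖ := norm_nonneg _
  set η : ℝ := (1 + β) / 2 with hηdef
  have hη0 : (0:ℝ) < η := by rw [hηdef]; linarith
  have hη1 : η < 1 := by rw [hηdef]; linarith
  have hηβ : β < η := by rw [hηdef]; linarith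
  have hMint : Integrable (fun z : EuclideanSpace ℝ (Fin d) => ‖z‖ ^ η * qbar 1 z) :=
    hmom η hη0 hη1
  set M : ℝ := ∫ z : EuclideanSpace ℝ (Fin d), ‖z‖ ^ η * qbar 1 z with hMdef
  have hM0 : 0 ≤ M :=
    integral_nonneg fun z => mul_nonneg (Real.rpow_nonneg (norm_nonneg _) _) (hqpos 1 one_pos z)
  -- qbar t is integrable
  have hqbarInt : ∀ t : ℝ, 0 < t → Integrable (qbar t) := by
    intro t ht
    by_contra h
    have h1 := hqint t ht
    rw [integral_undef h] at h1
    norm_num at h1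
  -- moments of qbar t
  have hmomt : ∀ t : ℝ, 0 < t →
      Integrable (fun z : EuclideanSpace ℝ (Fin d) => ‖z‖ ^ η * qbar t z) ∧
      (∫ z : EuclideanSpace ℝ (Fin d), ‖z‖ ^ η * qbar t z) = t ^ η * M := by
    intro t ht
    have hfun : (fun z : EuclideanSpace ℝ (Fin d) => ‖z‖ ^ η * qbar t z)
        = fun z => t ^ (η - (d:ℝ)) * (‖t⁻¹ • z‖ ^ η * qbar 1 (t⁻¹ • z)) := by
      funext z
      have hns : ‖t⁻¹ • z‖ ^ η = t ^ (-η) * ‖z‖ ^ η := by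
        rw [norm_smul, norm_inv, Real.norm_eq_abs, abs_of_pos ht,
          Real.mul_rpow (inv_nonneg.mpr ht.le) (norm_nonneg z),
          Real.inv_rpow ht.le, ← Real.rpow_neg ht.le]
      have h2 : t ^ (η - (d:ℝ)) * t ^ (-η) = t ^ (-(d:ℝ)) := by
        rw [← Real.rpow_add ht]; congr 1; ring
      rw [hqscale t ht z, hns, ← h2]; ring
    have hInt2 : Integrable
        (fun z : EuclideanSpace ℝ (Fin d) => ‖t⁻¹ • z‖ ^ η * qbar 1 (t⁻¹ • z)) :=
      (integrable_comp_smul_iff volume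
        (fun z : EuclideanSpace ℝ (Fin d) => ‖z‖ ^ η * qbar 1 z)
        (inv_ne_zero ht.ne')).mpr hMint
    constructor
    · rw [hfun]; exact hInt2.const_mul _
    · rw [hfun, integral_const_mul,
        Measure.integral_comp_smul volume
          (fun z : EuclideanSpace ℝ (Fin d) => ‖z‖ ^ η * qbar 1 z) t⁻¹,
        finrank_euclideanSpace_fin, smul_eq_mul]
      have habs : |((t⁻¹ : ℝ) ^ d)⁻¹| = t ^ (d:ℝ) := by
        rw [inv_pow, inv_inv, abs_of_pos (pow_pos ht d), Real.rpow_natCast]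
      rw [habs, ← hMdef, ← mul_assoc, ← Real.rpow_add ht]
      congr 2
      push_cast
      ring
    -- end hmomt
  refine ⟨2 + ‖b₀‖, by linarith, 2 * C * M / (η - β) + 2 * C / β, ?_⟩
  have hC'0 : 0 ≤ 2 * C * M / (η - β) + 2 * C / β := by
    have h1 : 0 ≤ 2 * C * M / (η - β) :=
      div_nonneg (mul_nonneg (by linarith) hM0) (by linarith)
    have h2 : 0 ≤ 2 * C / β := by positivity
    linarith
  intro l hl x ξ
  have hl0 : (0:ℝ) < l := lt_of_lt_of_le one_pos hl
  have hRHS : (2 * C * M / (η - β) + 2 * C / β) ≤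
      (2 * C * M / (η - β) + 2 * C / β) * (1 + l⁻¹) := by
    have : (0:ℝ) ≤ l⁻¹ := by positivity
    nlinarith
  by_cases hxξ : x = ξ
  · subst hxξ
    have hz : (∫ t in Set.Ioi (0:ℝ), Real.exp (-l * t) *
          ∫ y in {y : EuclideanSpace ℝ (Fin d) | (2 + ‖b₀‖) * ‖x - x‖ ≤ ‖x - y‖},
            ‖fderiv ℝ (pZ t) (y - x - t • b₀) - fderiv ℝ (pZ t) (y - x - t • b₀)‖) = 0 := by
      simp
    rw [hz]
    have : (0:ℝ) < 1 + l⁻¹ := by positivity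
    nlinarith
  set r : ℝ := ‖x - ξ‖ with hrdef
  have hr : 0 < r := by rw [hrdef]; exact norm_sub_pos_iff.mpr hxξ
  set K : ℝ := 2 + ‖b₀‖ with hKdef
  set S : Set (EuclideanSpace ℝ (Fin d)) := {y | K * r ≤ ‖x - y‖} with hSdef
  have hS : MeasurableSet S := by
    have : IsClosed S :=
      isClosed_le continuous_const ((continuous_const.sub continuous_id).norm)
    exact this.measurableSet
  set A1 : ℝ := 2 * C * M * r ^ (β - η) with hA1def
  set A2 : ℝ := 2 * C * r ^ β with hA2def
  set g : ℝ → ℝ := fun t => if t ≤ r then A1 * t ^ (η - β - 1) else A2 * t ^ (-β - 1)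
    with hgdef
  -- core estimate
  have hcore : ∀ t : ℝ, 0 < t →
      (∫ y in S, ‖fderiv ℝ (pZ t) (y - x - t • b₀) - fderiv ℝ (pZ t) (y - ξ - t • b₀)‖)
        ≤ g t := by
    intro t ht
    have htβ : (0:ℝ) < t ^ β := Real.rpow_pos_of_pos ht β
    have hrβ : (0:ℝ) < r ^ β := Real.rpow_pos_of_pos hr β
    have hrη : (0:ℝ) < r ^ η := Real.rpow_pos_of_pos hr η
    have hcβ : (0:ℝ) ≤ C / t * (r / t) ^ β :=
      mul_nonneg (by positivity) (Real.rpow_nonneg (by positivity) β)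
    have hnormtb : ‖t • b₀‖ = t * ‖b₀‖ := by
      rw [norm_smul, Real.norm_eq_abs, abs_of_pos ht]
    -- the Hölder bound, valid everywhere
    have hHB : ∀ y : EuclideanSpace ℝ (Fin d),
        ‖fderiv ℝ (pZ t) (y - x - t • b₀) - fderiv ℝ (pZ t) (y - ξ - t • b₀)‖ ≤
          C / t * (r / t) ^ β *
            (qbar t (y - x - t • b₀) + qbar t (y - ξ - t • b₀)) := by
      intro y
      have h := hHolder t ht (y - x - t • b₀) (y - ξ - t • b₀)
      have hdiff : (y - x - t • b₀) - (y - ξ - t • b₀) = ξ - x := by abel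
      rw [hdiff, norm_sub_rev ξ x, ← hrdef] at h
      exact h
    by_cases htr : t ≤ r
    · -- small time: use moment bound
      rw [hgdef]
      simp only [if_pos htr]
      set G : EuclideanSpace ℝ (Fin d) → ℝ := fun y =>
        C / t * (r / t) ^ β * ((r ^ η)⁻¹ *
          (‖y - (x + t • b₀)‖ ^ η * qbar t (y - (x + t • b₀)) +
           ‖y - (ξ + t • b₀)‖ ^ η * qbar t (y - (ξ + t • b₀)))) with hGdef
      have hGint : Integrable G := by
        apply Integrable.const_mul
        apply Integrable.const_mul
        exact ((hmomt t ht).1.comp_sub_right (x + t • b₀)).add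
          ((hmomt t ht).1.comp_sub_right (ξ + t • b₀))
      have hG0 : ∀ y, 0 ≤ G y := by
        intro y
        apply mul_nonneg hcβ
        apply mul_nonneg (by positivity)
        apply add_nonneg
        · exact mul_nonneg (Real.rpow_nonneg (norm_nonneg _) _) (hqpos t ht _)
        · exact mul_nonneg (Real.rpow_nonneg (norm_nonneg _) _) (hqpos t ht _)
      have step1 : (∫ y in S,
            ‖fderiv ℝ (pZ t) (y - x - t • b₀) - fderiv ℝ (pZ t) (y - ξ - t • b₀)‖)
          ≤ ∫ y in S, G y := by
        apply integral_mono_of_nonneg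
        · exact Filter.Eventually.of_forall fun y => norm_nonneg _
        · exact hGint.integrableOn
        · filter_upwards [self_mem_ae_restrict hS] with y hy
          have hyx : K * r ≤ ‖x - y‖ := hy
          have hxy : ‖y - x‖ = ‖x - y‖ := norm_sub_rev y x
          have n1 : r ≤ ‖y - x - t • b₀‖ := by
            have e1 : y - x - t • b₀ + t • b₀ = y - x := by abel
            have e2 : ‖y - x‖ ≤ ‖y - x - t • b₀‖ + ‖t • b₀‖ := by
              calc ‖y - x‖ = ‖y - x - t • b₀ + t • b₀‖ := by rw [e1]
                _ ≤ ‖y - x - t • b₀‖ + ‖t • b₀‖ := norm_add_le _ _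
            rw [hnormtb] at e2
            have hb : t * ‖b₀‖ ≤ r * ‖b₀‖ := mul_le_mul_of_nonneg_right htr hb0
            rw [hKdef] at hyx
            nlinarith [hxy, hyx, e2, hr]
          have n2 : r ≤ ‖y - ξ - t • b₀‖ := by
            have e1 : y - ξ - t • b₀ + (ξ - x) + t • b₀ = y - x := by abel
            have e2 : ‖y - x‖ ≤ ‖y - ξ - t • b₀‖ + ‖ξ - x‖ + ‖t • b₀‖ := by
              calc ‖y - x‖ = ‖y - ξ - t • b₀ + (ξ - x) + t • b₀‖ := by rw [e1]
                _ ≤ ‖y - ξ - t • b₀ + (ξ - x)‖ + ‖t • b₀‖ := norm_add_le _ _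
                _ ≤ ‖y - ξ - t • b₀‖ + ‖ξ - x‖ + ‖t • b₀‖ := by
                    have := norm_add_le (y - ξ - t • b₀) (ξ - x)
                    linarith
            rw [hnormtb, norm_sub_rev ξ x, ← hrdef] at e2
            have hb : t * ‖b₀‖ ≤ r * ‖b₀‖ := mul_le_mul_of_nonneg_right htr hb0
            rw [hKdef] at hyx
            nlinarith [hxy, hyx, e2, hr]
          -- combine
          have key : qbar t (y - x - t • b₀) + qbar t (y - ξ - t • b₀) ≤
              (r ^ η)⁻¹ *
                (‖y - x - t • b₀‖ ^ η * qbar t (y - x - t • b₀) +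
                 ‖y - ξ - t • b₀‖ ^ η * qbar t (y - ξ - t • b₀)) := by
            have h1 : r ^ η * qbar t (y - x - t • b₀) ≤
                ‖y - x - t • b₀‖ ^ η * qbar t (y - x - t • b₀) :=
              mul_le_mul_of_nonneg_right (Real.rpow_le_rpow hr.le n1 hη0.le) (hqpos t ht _)
            have h2 : r ^ η * qbar t (y - ξ - t • b₀) ≤
                ‖y - ξ - t • b₀‖ ^ η * qbar t (y - ξ - t • b₀) :=
              mul_le_mul_of_nonneg_right (Real.rpow_le_rpow hr.le n2 hη0.le) (hqpos t ht _)
            rw [inv_mul_eq_div, le_div_iff₀ hrη]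
            nlinarith [h1, h2]
          calc ‖fderiv ℝ (pZ t) (y - x - t • b₀) - fderiv ℝ (pZ t) (y - ξ - t • b₀)‖
              ≤ C / t * (r / t) ^ β *
                  (qbar t (y - x - t • b₀) + qbar t (y - ξ - t • b₀)) := hHB y
            _ ≤ C / t * (r / t) ^ β * ((r ^ η)⁻¹ *
                  (‖y - x - t • b₀‖ ^ η * qbar t (y - x - t • b₀) +
                   ‖y - ξ - t • b₀‖ ^ η * qbar t (y - ξ - t • b₀))) :=
                mul_le_mul_of_nonneg_left key hcβ
            _ = G y := by rw [hGdef]; simp only [sub_sub]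
      have step2 : (∫ y in S, G y) ≤ ∫ y, G y :=
        setIntegral_le_integral hGint (Filter.Eventually.of_forall hG0)
      have step3 : (∫ y, G y) = A1 * t ^ (η - β - 1) := by
        rw [hGdef]
        rw [integral_const_mul, integral_const_mul]
        rw [integral_add ((hmomt t ht).1.comp_sub_right (x + t • b₀))
          ((hmomt t ht).1.comp_sub_right (ξ + t • b₀))]
        rw [integral_sub_right_eq_self
          (fun z : EuclideanSpace ℝ (Fin d) => ‖z‖ ^ η * qbar t z) (x + t • b₀)]
        rw [integral_sub_right_eq_self
          (fun z : EuclideanSpace ℝ (Fin d) => ‖z‖ ^ η * qbar t z) (ξ + t • b₀)]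
        rw [(hmomt t ht).2, hA1def]
        -- algebra
        have e1 : (r / t) ^ β = r ^ β / t ^ β := Real.div_rpow hr.le ht.le β
        have e2 : t ^ (η - β - 1) = t ^ η / t ^ β / t := by
          rw [show η - β - 1 = η - β - 1 from rfl]
          rw [show (t : ℝ) ^ (η - β - 1) = t ^ ((η - β) - 1) by norm_num]
          rw [Real.rpow_sub ht (η - β) 1, Real.rpow_sub ht η β, Real.rpow_one]
        have e3 : r ^ (β - η) = r ^ β / r ^ η := Real.rpow_sub hr β η
        have htη : (0:ℝ) < t ^ η := Real.rpow_pos_of_pos ht η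
        rw [e1, e2, e3]
        field_simp
        ring
      calc (∫ y in S,
            ‖fderiv ℝ (pZ t) (y - x - t • b₀) - fderiv ℝ (pZ t) (y - ξ - t • b₀)‖)
          ≤ ∫ y in S, G y := step1
        _ ≤ ∫ y, G y := step2
        _ = A1 * t ^ (η - β - 1) := step3
    · -- large time: crude bound
      rw [hgdef]
      simp only [if_neg htr]
      set B : EuclideanSpace ℝ (Fin d) → ℝ := fun y =>
        C / t * (r / t) ^ β *
          (qbar t (y - (x + t • b₀)) + qbar t (y - (ξ + t • b₀))) with hBdef
      have hBint : Integrable B := by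
        apply Integrable.const_mul
        exact ((hqbarInt t ht).comp_sub_right (x + t • b₀)).add
          ((hqbarInt t ht).comp_sub_right (ξ + t • b₀))
      have hB0 : ∀ y, 0 ≤ B y := fun y =>
        mul_nonneg hcβ (add_nonneg (hqpos t ht _) (hqpos t ht _))
      have step1 : (∫ y in S,
            ‖fderiv ℝ (pZ t) (y - x - t • b₀) - fderiv ℝ (pZ t) (y - ξ - t • b₀)‖)
          ≤ ∫ y in S, B y := by
        apply integral_mono_of_nonneg
        · exact Filter.Eventually.of_forall fun y => norm_nonneg _
        · exact hBint.integrableOn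
        · apply Filter.Eventually.of_forall
          intro y
          calc ‖fderiv ℝ (pZ t) (y - x - t • b₀) - fderiv ℝ (pZ t) (y - ξ - t • b₀)‖
              ≤ C / t * (r / t) ^ β *
                  (qbar t (y - x - t • b₀) + qbar t (y - ξ - t • b₀)) := hHB y
            _ = B y := by rw [hBdef]; simp only [sub_sub]
      have step2 : (∫ y in S, B y) ≤ ∫ y, B y :=
        setIntegral_le_integral hBint (Filter.Eventually.of_forall hB0)
      have step3 : (∫ y, B y) = A2 * t ^ (-β - 1) := by
        rw [hBdef, integral_const_mul]
        rw [integral_add ((hqbarInt t ht).comp_sub_right (x + t • b₀))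
          ((hqbarInt t ht).comp_sub_right (ξ + t • b₀))]
        rw [integral_sub_right_eq_self (qbar t) (x + t • b₀),
          integral_sub_right_eq_self (qbar t) (ξ + t • b₀), hqint t ht, hA2def]
        have e1 : (r / t) ^ β = r ^ β / t ^ β := Real.div_rpow hr.le ht.le β
        have e2 : t ^ (-β - 1) = (t ^ β)⁻¹ / t := by
          rw [show (t : ℝ) ^ (-β - 1) = t ^ (-β - 1) from rfl,
            show -β - 1 = (-β) - 1 by ring,
            Real.rpow_sub ht (-β) 1, Real.rpow_one, Real.rpow_neg ht.le]
        rw [e1, e2]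
        field_simp
        ring
      calc (∫ y in S,
            ‖fderiv ℝ (pZ t) (y - x - t • b₀) - fderiv ℝ (pZ t) (y - ξ - t • b₀)‖)
          ≤ ∫ y in S, B y := step1
        _ ≤ ∫ y, B y := step2
        _ = A2 * t ^ (-β - 1) := step3
  -- integrability of g on Ioi 0
  have hg1 : IntegrableOn (fun t : ℝ => A1 * t ^ (η - β - 1)) (Set.Ioc 0 r) := by
    have : IntervalIntegrable (fun t : ℝ => t ^ (η - β - 1)) volume 0 r :=
      intervalIntegral.intervalIntegrable_rpow' (by linarith)
    exact (this.1).const_mul A1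
  have hg2 : IntegrableOn (fun t : ℝ => A2 * t ^ (-β - 1)) (Set.Ioi r) :=
    (integrableOn_Ioi_rpow_of_lt (by linarith) hr).const_mul A2
  have hgu1 : IntegrableOn g (Set.Ioc 0 r) := by
    apply hg1.congr_fun _ measurableSet_Ioc
    intro t ht
    rw [hgdef]
    simp only [if_pos ht.2]
  have hgu2 : IntegrableOn g (Set.Ioi r) := by
    apply hg2.congr_fun _ measurableSet_Ioi
    intro t ht
    rw [hgdef]
    simp only [if_neg (not_le.mpr (Set.mem_Ioi.mp ht))]
  have hgint : IntegrableOn g (Set.Ioi 0) := by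
    rw [← Set.Ioc_union_Ioi_eq_Ioi hr.le]
    exact hgu1.union hgu2
  -- value of ∫ g
  have hgval : (∫ t in Set.Ioi (0:ℝ), g t) = 2 * C * M / (η - β) + 2 * C / β := by
    have hsplit : (∫ t in Set.Ioi (0:ℝ), g t)
        = (∫ t in Set.Ioc (0:ℝ) r, g t) + ∫ t in Set.Ioi r, g t := by
      rw [← Set.Ioc_union_Ioi_eq_Ioi hr.le,
        setIntegral_union (Set.Ioc_disjoint_Ioi le_rfl) measurableSet_Ioi hgu1 hgu2]
    have v1 : (∫ t in Set.Ioc (0:ℝ) r, g t) = 2 * C * M / (η - β) := by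
      have e : (∫ t in Set.Ioc (0:ℝ) r, g t)
          = ∫ t in Set.Ioc (0:ℝ) r, A1 * t ^ (η - β - 1) :=
        setIntegral_congr_fun measurableSet_Ioc
          (fun t ht => by simp only [hgdef]; rw [if_pos ht.2])
      have e2 : (∫ t in Set.Ioc (0:ℝ) r, (t:ℝ) ^ (η - β - 1))
          = ∫ t in (0:ℝ)..r, (t:ℝ) ^ (η - β - 1) :=
        (intervalIntegral.integral_of_le hr.le).symm
      rw [e, integral_const_mul, e2,
        integral_rpow (Or.inl (by linarith)),
        show η - β - 1 + 1 = η - β by ring,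
        Real.zero_rpow (by linarith : (0:ℝ) < η - β).ne', sub_zero, hA1def]
      rw [show 2 * C * M * r ^ (β - η) * (r ^ (η - β) / (η - β))
          = 2 * C * M * (r ^ (β - η) * r ^ (η - β)) / (η - β) by ring,
        ← Real.rpow_add hr, show β - η + (η - β) = 0 by ring, Real.rpow_zero, mul_one]
    have v2 : (∫ t in Set.Ioi r, g t) = 2 * C / β := by
      have e : (∫ t in Set.Ioi r, g t) = ∫ t in Set.Ioi r, A2 * t ^ (-β - 1) :=
        setIntegral_congr_fun measurableSet_Ioi
          (fun t ht => by simp only [hgdef]; rw [if_neg (not_le.mpr (Set.mem_Ioi.mp ht))])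
      rw [e, integral_const_mul, integral_Ioi_rpow_of_lt (by linarith) hr,
        show -β - 1 + 1 = -β by ring, hA2def]
      rw [show 2 * C * r ^ β * (-r ^ (-β) / -β) = 2 * C * (r ^ β * r ^ (-β)) / β by ring,
        ← Real.rpow_add hr, show β + -β = 0 by ring, Real.rpow_zero, mul_one]
    rw [hsplit, v1, v2]
  -- conclusion
  have final : (∫ t in Set.Ioi (0:ℝ), g t) ≤
      (2 * C * M / (η - β) + 2 * C / β) * (1 + l⁻¹) := by
    rw [hgval]; exact hRHS
  refine le_trans ?_ final
  apply integral_mono_of_nonneg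
  · exact Filter.Eventually.of_forall fun t =>
      mul_nonneg (Real.exp_pos _).le (integral_nonneg fun y => norm_nonneg _)
  · exact hgint
  · filter_upwards [self_mem_ae_restrict measurableSet_Ioi] with t ht
    have ht0 : (0:ℝ) < t := ht
    have hexp : Real.exp (-l * t) ≤ 1 := Real.exp_le_one_iff.mpr (by nlinarith)
    have hin0 : 0 ≤ (∫ y in S,
        ‖fderiv ℝ (pZ t) (y - x - t • b₀) - fderiv ℝ (pZ t) (y - ξ - t • b₀)‖) :=
      integral_nonneg fun y => norm_nonneg _
    calc Real.exp (-l * t) * (∫ y in S,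
          ‖fderiv ℝ (pZ t) (y - x - t • b₀) - fderiv ℝ (pZ t) (y - ξ - t • b₀)‖)
        ≤ 1 * (∫ y in S,
          ‖fderiv ℝ (pZ t) (y - x - t • b₀) - fderiv ℝ (pZ t) (y - ξ - t • b₀)‖) :=
          mul_le_mul_of_nonneg_right hexp hin0
      _ = _ := one_mul _
      _ ≤ g t := hcore t ht0
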